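/- arXiv:2005.13372 — 6 statements merged into one kernel-verified Lean document; each statement's English description precedes it below -/
import Mathlib

section
/- Let p be a prime and α ≥ 0. The number of subgroups of (ℤ/p^αℤ)² of order p^α equals (p^(α+1) − 1)/(p − 1). -/
open AddSubgroup

section Aux

variable {p α : ℕ}

lemma aux_addOrderOf (hp : p.Prime) {i : ℕ} (hi : i ≤ α) :
    addOrderOf ((p ^ i : ℕ) : ZMod (p ^ α)) = p ^ (α - i) := by
  rw [ZMod.addOrderOf_coe _ (pow_ne_zero _ hp.ne_zero),
    Nat.gcd_eq_right (pow_dvd_pow p hi), Nat.pow_div hi hp.pos]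

lemma aux_card_zmul (hp : p.Prime) {i : ℕ} (hi : i ≤ α) :
    Nat.card (zmultiples ((p ^ i : ℕ) : ZMod (p ^ α))) = p ^ (α - i) := by
  rw [Nat.card_zmultiples, aux_addOrderOf hp hi]

lemma aux_unique (hp : p.Prime) {S : AddSubgroup (ZMod (p ^ α))} {s : ℕ} (hs : s ≤ α)
    (hcard : Nat.card S = p ^ s) :
    S = zmultiples ((p ^ (α - s) : ℕ) : ZMod (p ^ α)) := by
  haveI : NeZero (p ^ α) := ⟨pow_ne_zero _ hp.ne_zero⟩
  refine AddSubgroup.eq_of_le_of_card_ge ?_ ?_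
  · intro x hx
    have h1 : (p ^ s) • x = 0 := by
      have h0 := card_nsmul_eq_zero' (x := (⟨x, hx⟩ : S))
      rw [hcard] at h0
      exact congrArg Subtype.val h0
    obtain ⟨v, rfl⟩ := ZMod.natCast_zmod_surjective (n := p ^ α) x
    rw [nsmul_eq_mul, ← Nat.cast_mul,
      ZMod.natCast_eq_zero_iff] at h1
    have hdvd : p ^ (α - s) ∣ v := by
      have h2 : p ^ s * p ^ (α - s) ∣ p ^ s * v := by
        rw [← pow_add, Nat.add_sub_cancel' hs]; exact h1
      exact (mul_dvd_mul_iff_left (pow_ne_zero s hp.ne_zero)).mp h2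
    obtain ⟨k, rfl⟩ := hdvd
    exact mem_zmultiples_iff.mpr ⟨k, by push_cast [zsmul_eq_mul]; ring⟩
  · rw [aux_card_zmul hp (Nat.sub_le _ _), Nat.sub_sub_self hs, hcard]



lemma aux_card_prod {A B : Type*} [AddGroup A] [AddGroup B] (S : AddSubgroup (A × B)) :
    Nat.card S =
      Nat.card (S.map (AddMonoidHom.fst A B)) * Nat.card (S.comap (AddMonoidHom.inr A B)) := by
  set g := (AddMonoidHom.fst A B).comp S.subtype with hg
  have h1 := AddSubgroup.card_eq_card_quotient_mul_card_addSubgroup (g.ker)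
  have h2 : Nat.card (S ⧸ g.ker) = Nat.card g.range :=
    Nat.card_congr (QuotientAddGroup.quotientKerEquivRange g).toEquiv
  have h3 : g.range = S.map (AddMonoidHom.fst A B) := by
    rw [hg, AddMonoidHom.range_comp, AddSubgroup.range_subtype]
  have h4 : Nat.card g.ker = Nat.card (S.comap (AddMonoidHom.inr A B)) := by
    refine Nat.card_congr ⟨fun x => ⟨x.1.1.2, ?_⟩, fun y => ⟨⟨(0, y.1), y.2⟩, ?_⟩, ?_, ?_⟩
    · have hx : x.1.1.1 = 0 := x.2
      have hm : ((x : S) : A × B) ∈ S := (x : S).2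
      simp [AddSubgroup.mem_comap, ← hx]
    · have : (0, (y : B)) ∈ S := y.2
      exact AddMonoidHom.mem_ker.mpr rfl
    · rintro ⟨⟨⟨a, b⟩, hS⟩, hk⟩
      have ha : a = 0 := hk
      subst ha; rfl
    · rintro ⟨y, hy⟩; rfl
  rw [h1, h2, h3, h4]

variable (p α : ℕ)

def Hgen1 (i c : ℕ) : ZMod (p ^ α) × ZMod (p ^ α) :=
  (((p ^ i : ℕ) : ZMod (p ^ α)), ((c : ℕ) : ZMod (p ^ α)))

def Hgen2 (i : ℕ) : ZMod (p ^ α) × ZMod (p ^ α) :=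
  ((0 : ZMod (p ^ α)), ((p ^ (α - i) : ℕ) : ZMod (p ^ α)))

def Hsub (i c : ℕ) : AddSubgroup (ZMod (p ^ α) × ZMod (p ^ α)) :=
  closure {Hgen1 p α i c, Hgen2 p α i}

lemma mem_Hsub {i c : ℕ} {x : ZMod (p ^ α) × ZMod (p ^ α)} :
    x ∈ Hsub p α i c ↔ ∃ m n : ℤ, m • Hgen1 p α i c + n • Hgen2 p α i = x :=
  AddSubgroup.mem_closure_pair

variable {p α} in
lemma zsmul_pow_eq_zero (hp : p.Prime) {i : ℕ} (hi : i ≤ α) {m : ℤ} :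
    m • ((p ^ i : ℕ) : ZMod (p ^ α)) = 0 ↔ ((p ^ (α - i) : ℕ) : ℤ) ∣ m := by
  rw [← addOrderOf_dvd_iff_zsmul_eq_zero, aux_addOrderOf hp hi]

lemma map_fst_Hsub (i c : ℕ) :
    (Hsub p α i c).map (AddMonoidHom.fst _ _) = zmultiples ((p ^ i : ℕ) : ZMod (p ^ α)) := by
  rw [Hsub, AddMonoidHom.map_closure, Set.image_pair]
  have h1 : (AddMonoidHom.fst (ZMod (p ^ α)) (ZMod (p ^ α))) (Hgen1 p α i c)
      = ((p ^ i : ℕ) : ZMod (p ^ α)) := rfl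
  have h2 : (AddMonoidHom.fst (ZMod (p ^ α)) (ZMod (p ^ α))) (Hgen2 p α i) = 0 := rfl
  rw [h1, h2, show ({((p ^ i : ℕ) : ZMod (p ^ α)), 0} : Set (ZMod (p ^ α)))
      = {((p ^ i : ℕ) : ZMod (p ^ α))} ∪ {0} from rfl,
    AddSubgroup.closure_union, AddSubgroup.closure_singleton_zero, sup_bot_eq,
    ← zmultiples_eq_closure]

variable {p α} in
lemma comap_inr_Hsub (hp : p.Prime) {i : ℕ} (hi : i ≤ α) (c : ℕ) :
    (Hsub p α i c).comap (AddMonoidHom.inr _ _)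
      = zmultiples ((p ^ (α - i) : ℕ) : ZMod (p ^ α)) := by
  refine le_antisymm ?_ (zmultiples_le.mpr ?_)
  · intro y hy
    rw [AddSubgroup.mem_comap, mem_Hsub] at hy
    obtain ⟨m, n, h⟩ := hy
    have h1 : m • ((p ^ i : ℕ) : ZMod (p ^ α)) = 0 := by
      have := congrArg Prod.fst h
      simpa [Hgen1, Hgen2] using this
    have h2 : m • ((c : ℕ) : ZMod (p ^ α)) + n • ((p ^ (α - i) : ℕ) : ZMod (p ^ α)) = y := by
      have := congrArg Prod.snd h
      simpa [Hgen1, Hgen2] using this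
    obtain ⟨t, rfl⟩ := (zsmul_pow_eq_zero hp hi).mp h1
    refine mem_zmultiples_iff.mpr ⟨t * c + n, ?_⟩
    rw [← h2]
    simp only [zsmul_eq_mul]
    push_cast
    ring
  · exact AddSubgroup.mem_comap.mpr (subset_closure (Set.mem_insert_iff.mpr (Or.inr rfl)))

variable {p α} in
lemma card_Hsub (hp : p.Prime) {i : ℕ} (hi : i ≤ α) (c : ℕ) :
    Nat.card (Hsub p α i c) = p ^ α := by
  rw [aux_card_prod, map_fst_Hsub, comap_inr_Hsub hp hi, aux_card_zmul hp hi,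
    aux_card_zmul hp (Nat.sub_le _ _), Nat.sub_sub_self hi, ← pow_add,
    Nat.sub_add_cancel hi]

variable {p α} in
lemma Hsub_surj (hp : p.Prime) {S : AddSubgroup (ZMod (p ^ α) × ZMod (p ^ α))}
    (hS : Nat.card S = p ^ α) :
    ∃ i ≤ α, ∃ c < p ^ (α - i), Hsub p α i c = S := by
  haveI : NeZero (p ^ α) := ⟨pow_ne_zero _ hp.ne_zero⟩
  have hA : Nat.card (S.map (AddMonoidHom.fst _ _)) ∣ p ^ α := by
    have h := AddSubgroup.card_addSubgroup_dvd_card (S.map (AddMonoidHom.fst _ _))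
    rwa [Nat.card_zmod] at h
  have hK : Nat.card (S.comap (AddMonoidHom.inr _ _)) ∣ p ^ α := by
    have h := AddSubgroup.card_addSubgroup_dvd_card (S.comap (AddMonoidHom.inr _ _))
    rwa [Nat.card_zmod] at h
  obtain ⟨a, ha, hAcard⟩ := (Nat.dvd_prime_pow hp).mp hA
  obtain ⟨k, hk, hKcard⟩ := (Nat.dvd_prime_pow hp).mp hK
  have hak : a + k = α := by
    have h := aux_card_prod S
    rw [hS, hAcard, hKcard, ← pow_add] at h
    exact (Nat.pow_right_injective hp.two_le h).symm
  set i := α - a with hi_def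
  have hi : i ≤ α := Nat.sub_le _ _
  have hA' : S.map (AddMonoidHom.fst _ _) = zmultiples ((p ^ i : ℕ) : ZMod (p ^ α)) :=
    aux_unique hp ha hAcard
  have hK' : S.comap (AddMonoidHom.inr _ _)
      = zmultiples ((p ^ (α - i) : ℕ) : ZMod (p ^ α)) := by
    have h := aux_unique hp hk hKcard
    rwa [show α - k = α - i by omega] at h
  have hgen2 : Hgen2 p α i ∈ S := by
    have h : ((p ^ (α - i) : ℕ) : ZMod (p ^ α)) ∈ S.comap (AddMonoidHom.inr _ _) := by
      rw [hK']; exact mem_zmultiples _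
    exact AddSubgroup.mem_comap.mp h
  have hmem : ((p ^ i : ℕ) : ZMod (p ^ α)) ∈ S.map (AddMonoidHom.fst _ _) := by
    rw [hA']; exact mem_zmultiples _
  obtain ⟨g, hgS, hg1⟩ := hmem
  set d : ZMod (p ^ α) := g.2 with hd
  set r := d.val % p ^ (α - i) with hr
  set q := d.val / p ^ (α - i) with hq
  have hgen1 : Hgen1 p α i r ∈ S := by
    have h2 : Hgen1 p α i r = g - (q : ℤ) • Hgen2 p α i := by
      have hdval : ((d.val : ℕ) : ZMod (p ^ α)) = d := ZMod.natCast_zmod_val d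
      have hsplit : d.val = q * p ^ (α - i) + r := by
        rw [hq, hr, Nat.mul_comm, Nat.div_add_mod]
      refine Prod.ext ?_ ?_
      · show ((p ^ i : ℕ) : ZMod (p ^ α)) = g.1 - (q : ℤ) • (0 : ZMod (p ^ α))
        have hg1' : g.1 = ((p ^ i : ℕ) : ZMod (p ^ α)) := hg1
        rw [hg1']; simp
      · show ((r : ℕ) : ZMod (p ^ α)) = d - (q : ℤ) • ((p ^ (α - i) : ℕ) : ZMod (p ^ α))
        rw [← hdval, hsplit]
        simp only [zsmul_eq_mul]
        push_cast
        ring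
    rw [h2]
    exact sub_mem hgS (zsmul_mem hgen2 _)
  have hle : Hsub p α i r ≤ S := by
    rw [Hsub, closure_le]
    rintro x (rfl | rfl)
    · exact hgen1
    · exact hgen2
  refine ⟨i, hi, r, Nat.mod_lt _ (pow_pos hp.pos _), ?_⟩
  exact AddSubgroup.eq_of_le_of_card_ge hle (by rw [hS, card_Hsub hp hi])

variable {p α} in
lemma Hsub_inj (hp : p.Prime) {i i' c c' : ℕ} (hi : i ≤ α) (hi' : i' ≤ α)
    (hc : c < p ^ (α - i)) (hc' : c' < p ^ (α - i'))
    (h : Hsub p α i c = Hsub p α i' c') : i = i' ∧ c = c' := by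
  have hii : i = i' := by
    have h1 : zmultiples ((p ^ i : ℕ) : ZMod (p ^ α))
        = zmultiples ((p ^ i' : ℕ) : ZMod (p ^ α)) := by
      rw [← map_fst_Hsub p α i c, ← map_fst_Hsub p α i' c', h]
    have h2 : p ^ (α - i) = p ^ (α - i') := by
      rw [← aux_card_zmul hp hi, ← aux_card_zmul hp hi', h1]
    have := Nat.pow_right_injective hp.two_le h2
    omega
  subst hii
  refine ⟨rfl, ?_⟩
  have hmem : Hgen1 p α i c ∈ Hsub p α i c' := by
    rw [← h]; exact subset_closure (Set.mem_insert _ _)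
  rw [mem_Hsub] at hmem
  obtain ⟨m, n, heq⟩ := hmem
  have e1 : ((m : ZMod (p ^ α)) * ((p ^ i : ℕ) : ZMod (p ^ α)) = ((p ^ i : ℕ) : ZMod (p ^ α))) := by
    have h1 := congrArg Prod.fst heq
    simpa [Hgen1, Hgen2, zsmul_eq_mul] using h1
  have e2 : (m : ZMod (p ^ α)) * ((c' : ℕ) : ZMod (p ^ α))
      + (n : ZMod (p ^ α)) * ((p ^ (α - i) : ℕ) : ZMod (p ^ α)) = ((c : ℕ) : ZMod (p ^ α)) := by
    have h2 := congrArg Prod.snd heq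
    simpa [Hgen1, Hgen2, zsmul_eq_mul] using h2
  obtain ⟨t, ht⟩ : ((p ^ (α - i) : ℕ) : ℤ) ∣ m - 1 := by
    refine (zsmul_pow_eq_zero hp hi).mp ?_
    rw [zsmul_eq_mul]
    push_cast at e1 ⊢
    linear_combination e1
  have hm : m = 1 + ((p ^ (α - i) : ℕ) : ℤ) * t := by rw [← ht]; ring
  rw [hm] at e2
  have hz : ((((c : ℤ) - c' - (t * c' + n) * ((p ^ (α - i) : ℕ) : ℤ)) : ℤ) : ZMod (p ^ α)) = 0 := by
    push_cast at e2 ⊢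
    linear_combination -e2
  have hdvd1 := (ZMod.intCast_zmod_eq_zero_iff_dvd _ _).mp hz
  have hdvd2 : ((p ^ (α - i) : ℕ) : ℤ) ∣ (c : ℤ) - c' := by
    have hPA : ((p ^ (α - i) : ℕ) : ℤ) ∣ ((p ^ α : ℕ) : ℤ) :=
      Int.natCast_dvd_natCast.mpr (pow_dvd_pow p (Nat.sub_le _ _))
    have h3 := dvd_trans hPA hdvd1
    have h9 : (c : ℤ) - c' = ((c : ℤ) - c' - (t * c' + n) * ((p ^ (α - i) : ℕ) : ℤ))
        + (t * c' + n) * ((p ^ (α - i) : ℕ) : ℤ) := by ring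
    rw [h9]
    exact dvd_add h3 (dvd_mul_left _ _)
  have habs : |(c : ℤ) - c'| < ((p ^ (α - i) : ℕ) : ℤ) := by
    rw [abs_lt]; omega
  have := Int.eq_zero_of_abs_lt_dvd hdvd2 habs
  omega

end Aux

/-- The number of subgroups of `(ℤ/p^αℤ)²` of order `p^α` equals `(p^(α+1) - 1)/(p - 1)`. -/
theorem count_subgroups_of_order_p_pow (p : ℕ) (hp : p.Prime) (α : ℕ) :
    Nat.card {S : AddSubgroup (ZMod (p ^ α) × ZMod (p ^ α)) // Nat.card S = p ^ α} =
      (p ^ (α + 1) - 1) / (p - 1) := by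
  haveI : NeZero (p ^ α) := ⟨pow_ne_zero _ hp.ne_zero⟩
  have hbij : Function.Bijective
      (fun x : (i : Fin (α + 1)) × Fin (p ^ (α - (i : ℕ))) =>
        (⟨Hsub p α x.1 x.2, card_Hsub hp (Nat.lt_succ_iff.mp x.1.2) _⟩ :
          {S : AddSubgroup (ZMod (p ^ α) × ZMod (p ^ α)) // Nat.card S = p ^ α})) := by
    constructor
    · rintro ⟨⟨i, hi⟩, ⟨c, hc⟩⟩ ⟨⟨i', hi'⟩, ⟨c', hc'⟩⟩ hxy
      simp only [Subtype.mk.injEq] at hxy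
      obtain ⟨h1, h2⟩ := Hsub_inj hp (Nat.lt_succ_iff.mp hi) (Nat.lt_succ_iff.mp hi') hc hc' hxy
      subst h1; subst h2; rfl
    · rintro ⟨S, hS⟩
      obtain ⟨i, hi, c, hcb, hE⟩ := Hsub_surj hp hS
      exact ⟨⟨⟨i, Nat.lt_succ_iff.mpr hi⟩, ⟨c, hcb⟩⟩, Subtype.ext hE⟩
  rw [← Nat.card_eq_of_bijective _ hbij, Nat.card_eq_fintype_card, Fintype.card_sigma]
  simp only [Fintype.card_fin]
  rw [Fin.sum_univ_eq_sum_range (fun j => p ^ (α - j)) (α + 1)]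
  have hrefl : ∑ j ∈ Finset.range (α + 1), p ^ (α - j)
      = ∑ j ∈ Finset.range (α + 1), p ^ j := by
    rw [← Finset.sum_range_reflect]
    refine Finset.sum_congr rfl fun j hj => ?_
    rw [Finset.mem_range] at hj
    congr 1
    omega
  rw [hrefl, Nat.geomSum_eq hp.two_le]
end

section
/- Let p be a prime, α ≥ 0, and let M be the automorphism of (ℤ/p^αℤ)² given by the matrix [[0,−1],[1,−1]]. A subgroup S of (ℤ/p^αℤ)² of order p^α of the form S = ⟨(p^i, x), (0, p^(α−i))⟩ with 0 ≤ i ≤ α and 0 ≤ x < p^(α−i) satisfies M·S = S if and only if 2i ≤ α and x = p^i·y for some integer y with p^(α−2i) ∣ y² − y + 1. -/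
/-- The endomorphism of `(ℤ/nℤ)²` given by the matrix `[[0,-1],[1,-1]]`,
i.e. `(a,b) ↦ (-b, a-b)`. -/
def Mxi (n : ℕ) : (ZMod n × ZMod n) →+ (ZMod n × ZMod n) :=
  AddMonoidHom.mk' (fun z => (-z.2, z.1 - z.2)) (by
    intro a b
    ext
    · simp
      ring
    · simp
      ring)

lemma key_int (p : ℕ) (hp : p.Prime) (α i x : ℕ) (hi : i ≤ α) :
    ((∃ a b : ℤ, (p:ℤ)^α ∣ a * (p:ℤ)^i + x ∧ (p:ℤ)^α ∣ a * x + b * (p:ℤ)^(α-i) - (p:ℤ)^i + x) ∧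
     (∃ c d : ℤ, (p:ℤ)^α ∣ c * (p:ℤ)^i + (p:ℤ)^(α-i) ∧
       (p:ℤ)^α ∣ c * x + d * (p:ℤ)^(α-i) + (p:ℤ)^(α-i))) ↔
    (2*i ≤ α ∧ ∃ y : ℤ, (p:ℤ)^α ∣ (x:ℤ) - (p:ℤ)^i * y ∧ (p:ℤ)^(α-2*i) ∣ y^2 - y + 1) := by
  have hp0 : (p:ℤ) ≠ 0 := Int.natCast_ne_zero.mpr hp.pos.ne'
  have hpi0 : (p:ℤ)^i ≠ 0 := pow_ne_zero _ hp0
  constructor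
  · rintro ⟨⟨a, b, h1, h2⟩, ⟨c, d, h3, h4⟩⟩
    have hdiv : (p:ℤ)^i ∣ (p:ℤ)^(α-i) := by
      simpa using ((pow_dvd_pow (p:ℤ) hi).trans h3).sub (dvd_mul_left ((p:ℤ)^i) c)
    have h2i : 2*i ≤ α := by
      have : (p:ℕ)^i ∣ p^(α-i) := by exact_mod_cast hdiv
      have := (Nat.pow_dvd_pow_iff_le_right hp.one_lt).mp this
      omega
    have hpx : (p:ℤ)^i ∣ (x:ℤ) := by
      simpa using ((pow_dvd_pow (p:ℤ) hi).trans h1).sub (dvd_mul_left ((p:ℤ)^i) a)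
    refine ⟨h2i, ?_⟩
    obtain ⟨y, hy⟩ := hpx
    have hPa : (p:ℤ)^α = (p:ℤ)^i * (p:ℤ)^(α-i) := by rw [← pow_add]; congr 1; omega
    have hPb : (p:ℤ)^(α-i) = (p:ℤ)^i * (p:ℤ)^(α-2*i) := by rw [← pow_add]; congr 1; omega
    refine ⟨y, by rw [hy]; simp, ?_⟩
    have h6 : (p:ℤ)^(α-i) ∣ a + y := by
      have h6' : (p:ℤ)^i * (p:ℤ)^(α-i) ∣ (p:ℤ)^i * (a + y) := by
        rw [← hPa]
        have : (p:ℤ)^i * (a + y) = a * (p:ℤ)^i + x := by rw [hy]; ring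
        rw [this]; exact h1
      exact (mul_dvd_mul_iff_left hpi0).mp h6'
    obtain ⟨t, ht⟩ := h6
    obtain ⟨m, hm⟩ := h2
    have ha : a = (p:ℤ)^(α-i) * t - y := by linarith [ht]
    have h7 : (p:ℤ)^(α-i) ∣ (p:ℤ)^i * (y^2 - y + 1) := by
      refine ⟨b + (p:ℤ)^i * (t*y - m), ?_⟩
      linear_combination -hm + (a+1)*hy + (p:ℤ)^i*y*ha - m*hPa
    rw [hPb] at h7
    exact (mul_dvd_mul_iff_left hpi0).mp h7
  · rintro ⟨h2i, y, hy, k, hk⟩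
    obtain ⟨m, hm⟩ := hy
    have hPa : (p:ℤ)^(α-i) = (p:ℤ)^(α-2*i) * (p:ℤ)^i := by rw [← pow_add]; congr 1; omega
    refine ⟨⟨-y, k, ⟨m, by linear_combination hm⟩, ⟨(1-y)*m, by
        linear_combination (1-y)*hm - (p:ℤ)^i*hk + k*hPa⟩⟩,
      ⟨-(p:ℤ)^(α-2*i), y-1, ⟨0, by linear_combination hPa⟩, ⟨-(p:ℤ)^(α-2*i)*m, by
        linear_combination -(p:ℤ)^(α-2*i)*hm + y*hPa⟩⟩⟩

/-- A subgroup `S = ⟨(p^i, x), (0, p^(α-i))⟩` of `(ℤ/p^αℤ)²` (with `0 ≤ i ≤ α`,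
`0 ≤ x < p^(α-i)`) is stable under `(a,b) ↦ (-b, a-b)` if and only if `2i ≤ α` and
`x ≡ p^i y` for some integer `y` with `p^(α-2i) ∣ y² - y + 1`. -/
theorem Mxi_stable_iff (p : ℕ) (hp : p.Prime) (α i x : ℕ) (hi : i ≤ α)
    (hx : x < p ^ (α - i)) (S : AddSubgroup (ZMod (p ^ α) × ZMod (p ^ α)))
    (hS : S = AddSubgroup.closure
      {(((p : ZMod (p ^ α)) ^ i, (x : ZMod (p ^ α)))),
        ((0 : ZMod (p ^ α)), (p : ZMod (p ^ α)) ^ (α - i))}) :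
    S.map (Mxi (p ^ α)) = S ↔
      2 * i ≤ α ∧ ∃ y : ℤ,
        (x : ZMod (p ^ α)) = (p : ZMod (p ^ α)) ^ i * (y : ZMod (p ^ α)) ∧
        (p : ℤ) ^ (α - 2 * i) ∣ y ^ 2 - y + 1 := by
  haveI : NeZero (p ^ α) := ⟨pow_ne_zero _ hp.pos.ne'⟩
  set u : ZMod (p^α) × ZMod (p^α) := ((p : ZMod (p ^ α)) ^ i, (x : ZMod (p ^ α))) with hu
  set v : ZMod (p^α) × ZMod (p^α) := ((0 : ZMod (p ^ α)), (p : ZMod (p ^ α)) ^ (α - i)) with hv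
  -- casting an integer to `ZMod (p^α)` is zero iff divisible
  have hzmod : ∀ w : ℤ, ((w : ZMod (p^α)) = 0) ↔ (p:ℤ)^α ∣ w := by
    intro w
    rw [ZMod.intCast_zmod_eq_zero_iff_dvd]
    push_cast
    rfl
  -- membership in S
  have hmem : ∀ z : ZMod (p^α) × ZMod (p^α), z ∈ S ↔ ∃ a b : ℤ,
      z.1 = (a : ZMod (p^α)) * (p : ZMod (p^α))^i ∧
      z.2 = (a : ZMod (p^α)) * (x : ZMod (p^α)) + (b : ZMod (p^α)) * (p : ZMod (p^α))^(α-i) := by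
    intro z
    rw [hS, AddSubgroup.mem_closure_pair]
    constructor
    · rintro ⟨a, b, rfl⟩
      refine ⟨a, b, ?_, ?_⟩ <;>
        simp [Prod.smul_mk, Prod.mk_add_mk, zsmul_eq_mul, hu, hv]
    · rintro ⟨a, b, h1, h2⟩
      refine ⟨a, b, ?_⟩
      ext
      · simp [Prod.smul_mk, Prod.mk_add_mk, zsmul_eq_mul, h1, hu, hv]
      · simp [Prod.smul_mk, Prod.mk_add_mk, zsmul_eq_mul, h2, hu, hv]
  -- M³ = id
  have hM3 : ∀ z, Mxi (p^α) (Mxi (p^α) (Mxi (p^α) z)) = z := by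
    intro z
    ext <;> simp [Mxi] <;> ring
  -- stability reduces to images of the generators
  have hstab : S.map (Mxi (p^α)) = S ↔ Mxi (p^α) u ∈ S ∧ Mxi (p^α) v ∈ S := by
    constructor
    · intro h
      have hu' : u ∈ S := by rw [hS]; exact AddSubgroup.subset_closure (by simp)
      have hv' : v ∈ S := by rw [hS]; exact AddSubgroup.subset_closure (by simp)
      exact ⟨h ▸ AddSubgroup.mem_map_of_mem _ hu', h ▸ AddSubgroup.mem_map_of_mem _ hv'⟩
    · rintro ⟨h1, h2⟩
      have hle : S.map (Mxi (p^α)) ≤ S := by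
        rw [hS, AddMonoidHom.map_closure, Set.image_insert_eq, Set.image_singleton]
        refine (AddSubgroup.closure_le _).mpr ?_
        rw [Set.insert_subset_iff, Set.singleton_subset_iff]
        rw [hS] at h1 h2
        exact ⟨h1, h2⟩
      have hmapmap : ((S.map (Mxi (p^α))).map (Mxi (p^α))).map (Mxi (p^α)) = S := by
        rw [AddSubgroup.map_map, AddSubgroup.map_map]
        have : ((Mxi (p^α)).comp (Mxi (p^α))).comp (Mxi (p^α)) = AddMonoidHom.id _ :=
          AddMonoidHom.ext hM3
        rw [this, AddSubgroup.map_id]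
      refine le_antisymm hle ?_
      calc S = ((S.map (Mxi (p^α))).map (Mxi (p^α))).map (Mxi (p^α)) := hmapmap.symm
        _ ≤ (S.map (Mxi (p^α))).map (Mxi (p^α)) :=
            AddSubgroup.map_mono (AddSubgroup.map_mono hle)
        _ ≤ S.map (Mxi (p^α)) := AddSubgroup.map_mono hle
  have hu1 : Mxi (p^α) u = (-(x : ZMod (p^α)), (p : ZMod (p^α))^i - (x : ZMod (p^α))) := rfl
  have hv1 : Mxi (p^α) v =
      (-((p : ZMod (p^α))^(α-i)), 0 - (p : ZMod (p^α))^(α-i)) := rfl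
  rw [hstab, hu1, hv1, hmem _, hmem _]
  rw [show (∃ a b : ℤ,
        (-(x : ZMod (p^α)), (p : ZMod (p^α))^i - (x : ZMod (p^α))).1
          = (a : ZMod (p^α)) * (p : ZMod (p^α))^i ∧
        (-(x : ZMod (p^α)), (p : ZMod (p^α))^i - (x : ZMod (p^α))).2
          = (a : ZMod (p^α)) * (x : ZMod (p^α)) + (b : ZMod (p^α)) * (p : ZMod (p^α))^(α-i)) ↔
      (∃ a b : ℤ, (p:ℤ)^α ∣ a * (p:ℤ)^i + x ∧
        (p:ℤ)^α ∣ a * x + b * (p:ℤ)^(α-i) - (p:ℤ)^i + x) from ?_]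
  · rw [show (∃ c d : ℤ,
        (-((p : ZMod (p^α))^(α-i)), 0 - (p : ZMod (p^α))^(α-i)).1
          = (c : ZMod (p^α)) * (p : ZMod (p^α))^i ∧
        (-((p : ZMod (p^α))^(α-i)), 0 - (p : ZMod (p^α))^(α-i)).2
          = (c : ZMod (p^α)) * (x : ZMod (p^α)) + (d : ZMod (p^α)) * (p : ZMod (p^α))^(α-i)) ↔
      (∃ c d : ℤ, (p:ℤ)^α ∣ c * (p:ℤ)^i + (p:ℤ)^(α-i) ∧
        (p:ℤ)^α ∣ c * x + d * (p:ℤ)^(α-i) + (p:ℤ)^(α-i)) from ?_]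
    · rw [key_int p hp α i x hi]
      refine and_congr Iff.rfl (exists_congr fun y => and_congr ?_ Iff.rfl)
      rw [← sub_eq_zero,
        show ((x : ZMod (p^α)) - (p : ZMod (p^α))^i * (y : ZMod (p^α)))
          = (((x : ℤ) - (p:ℤ)^i * y : ℤ) : ZMod (p^α)) by push_cast; ring,
        hzmod]
    · refine exists_congr fun c => exists_congr fun d => and_congr ?_ ?_
      · rw [← sub_eq_zero,
          show ((-((p : ZMod (p^α))^(α-i)), 0 - (p : ZMod (p^α))^(α-i)).1
            - (c : ZMod (p^α)) * (p : ZMod (p^α))^i)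
            = ((-(c * (p:ℤ)^i + (p:ℤ)^(α-i)) : ℤ) : ZMod (p^α)) by push_cast; ring,
          hzmod, dvd_neg]
      · rw [← sub_eq_zero,
          show ((-((p : ZMod (p^α))^(α-i)), 0 - (p : ZMod (p^α))^(α-i)).2
            - ((c : ZMod (p^α)) * (x : ZMod (p^α)) + (d : ZMod (p^α)) * (p : ZMod (p^α))^(α-i)))
            = ((-(c * x + d * (p:ℤ)^(α-i) + (p:ℤ)^(α-i)) : ℤ) : ZMod (p^α)) by push_cast; ring,
          hzmod, dvd_neg]
  · refine exists_congr fun a => exists_congr fun b => and_congr ?_ ?_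
    · rw [← sub_eq_zero,
        show ((-(x : ZMod (p^α)), (p : ZMod (p^α))^i - (x : ZMod (p^α))).1
          - (a : ZMod (p^α)) * (p : ZMod (p^α))^i)
          = ((-(a * (p:ℤ)^i + x) : ℤ) : ZMod (p^α)) by push_cast; ring,
        hzmod, dvd_neg]
    · rw [← sub_eq_zero,
        show ((-(x : ZMod (p^α)), (p : ZMod (p^α))^i - (x : ZMod (p^α))).2
          - ((a : ZMod (p^α)) * (x : ZMod (p^α)) + (b : ZMod (p^α)) * (p : ZMod (p^α))^(α-i)))
          = ((-(a * x + b * (p:ℤ)^(α-i) - (p:ℤ)^i + x) : ℤ) : ZMod (p^α)) by push_cast; ring,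
        hzmod, dvd_neg]
end

section
/- Let p be a prime, α ≥ 0, and let N be the automorphism of (ℤ/p^αℤ)² given by N(a,b) = (−b, a). A subgroup S of (ℤ/p^αℤ)² of order p^α of the form S = ⟨(p^i, x), (0, p^(α−i))⟩ with 0 ≤ i ≤ α and 0 ≤ x < p^(α−i) satisfies N·S = S if and only if 2i ≤ α and x = p^i·y for some integer y with p^(α−2i) ∣ y² + 1. -/
/-- The endomorphism of `(ℤ/nℤ)²` given by the matrix `[[0,-1],[1,0]]`,
i.e. `(a,b) ↦ (-b, a)`. -/
def Nxi (n : ℕ) : (ZMod n × ZMod n) →+ (ZMod n × ZMod n) :=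
  AddMonoidHom.mk' (fun z => (-z.2, z.1)) (by
    intro a b
    ext
    · simp
      ring
    · simp)

lemma key_arith (p : ℕ) (hp : p.Prime) (α i x : ℕ) (hi : i ≤ α) :
    ((∃ a b : ℤ, (p:ℤ)^α ∣ -(x:ℤ) - a * (p:ℤ)^i ∧
        (p:ℤ)^α ∣ (p:ℤ)^i - (a * (x:ℤ) + b * (p:ℤ)^(α-i))) ∧
     (∃ a b : ℤ, (p:ℤ)^α ∣ -((p:ℤ)^(α-i)) - a * (p:ℤ)^i ∧
        (p:ℤ)^α ∣ (0:ℤ) - (a * (x:ℤ) + b * (p:ℤ)^(α-i)))) ↔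
    (2 * i ≤ α ∧ ∃ y : ℤ, (p:ℤ)^α ∣ (p:ℤ)^i * y - (x:ℤ) ∧
        (p:ℤ)^(α - 2*i) ∣ y^2 + 1) := by
  have hq1 : (1:ℤ) < (p:ℤ) := by exact_mod_cast hp.one_lt
  have hq0 : (0:ℤ) < (p:ℤ) := by linarith
  have hsplit : (p:ℤ) ^ i * (p:ℤ) ^ (α - i) = (p:ℤ) ^ α := by
    rw [← pow_add]; congr 1; omega
  constructor
  · rintro ⟨⟨a₁, b₁, h11, h12⟩, ⟨a₂, b₂, h21, h22⟩⟩
    have hdvd_ai : (p:ℤ) ^ i ∣ (p:ℤ) ^ α := pow_dvd_pow _ hi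
    have h2i : 2 * i ≤ α := by
      have h2 := hdvd_ai.trans h21
      have h3 : (p:ℤ) ^ i ∣ a₂ * (p:ℤ) ^ i := Dvd.intro_left _ rfl
      have h4 : (p:ℤ) ^ i ∣ (p:ℤ) ^ (α - i) := by
        have h5 := dvd_add h2 h3
        rw [show -((p:ℤ)^(α-i)) - a₂ * (p:ℤ)^i + a₂ * (p:ℤ)^i = -((p:ℤ)^(α-i)) by ring] at h5
        exact dvd_neg.mp h5
      have h5 : p ^ i ∣ p ^ (α - i) := by exact_mod_cast h4
      have h6 := (Nat.pow_dvd_pow_iff_le_right hp.one_lt).mp h5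
      omega
    have hsplit2 : (p:ℤ) ^ i * (p:ℤ) ^ (α - 2*i) = (p:ℤ) ^ (α - i) := by
      rw [← pow_add]; congr 1; omega
    have hpx : (p:ℤ) ^ i ∣ (x:ℤ) := by
      have h2 := hdvd_ai.trans h11
      have h3 : (p:ℤ) ^ i ∣ a₁ * (p:ℤ) ^ i := Dvd.intro_left _ rfl
      have h5 := dvd_add h2 h3
      rw [show -(x:ℤ) - a₁ * (p:ℤ)^i + a₁ * (p:ℤ)^i = -(x:ℤ) by ring] at h5
      exact dvd_neg.mp h5
    obtain ⟨y, hy⟩ := hpx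
    have hc : (p:ℤ) ^ (α - i) ∣ (-y - a₁) := by
      have h2 : (p:ℤ) ^ i * (p:ℤ) ^ (α - i) ∣ (p:ℤ) ^ i * (-y - a₁) := by
        rw [hsplit, show (p:ℤ) ^ i * (-y - a₁) = -(x:ℤ) - a₁ * (p:ℤ)^i by rw [hy]; ring]
        exact h11
      exact (mul_dvd_mul_iff_left (ne_of_gt (pow_pos hq0 i))).mp h2
    obtain ⟨c, hc⟩ := hc
    have ha₁ : a₁ = -y - (p:ℤ) ^ (α - i) * c := by linarith
    have h7 : (p:ℤ) ^ (α - i) ∣ (p:ℤ) ^ i * (y ^ 2 + 1) := by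
      have h8 : (p:ℤ) ^ (α - i) ∣ (p:ℤ) ^ i - (a₁ * (x:ℤ) + b₁ * (p:ℤ) ^ (α - i)) :=
        (pow_dvd_pow _ (by omega : α - i ≤ α)).trans h12
      have h9 : (p:ℤ) ^ i * (y ^ 2 + 1) =
          ((p:ℤ) ^ i - (a₁ * (x:ℤ) + b₁ * (p:ℤ) ^ (α - i))) +
            (p:ℤ) ^ (α - i) * (b₁ - c * (p:ℤ) ^ i * y) := by
        rw [hy, ha₁]; ring
      rw [h9]
      exact dvd_add h8 (Dvd.intro _ rfl)
    have h10 : (p:ℤ) ^ (α - 2*i) ∣ y ^ 2 + 1 := by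
      rw [← hsplit2] at h7
      exact (mul_dvd_mul_iff_left (ne_of_gt (pow_pos hq0 i))).mp h7
    exact ⟨h2i, y, by rw [hy]; simp, h10⟩
  · rintro ⟨h2i, y, hy, hk⟩
    obtain ⟨d, hd⟩ := hy
    obtain ⟨k, hk⟩ := hk
    have hsplit2 : (p:ℤ) ^ i * (p:ℤ) ^ (α - 2*i) = (p:ℤ) ^ (α - i) := by
      rw [← pow_add]; congr 1; omega
    refine ⟨⟨-y, k, ⟨d, by linear_combination hd⟩,
        ⟨-(y*d), by linear_combination (-y) * hd + (p:ℤ) ^ i * hk + k * hsplit2⟩⟩,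
      ⟨-((p:ℤ) ^ (α - 2*i)), y, ⟨0, by linear_combination hsplit2⟩,
        ⟨-((p:ℤ) ^ (α - 2*i) * d), by
          linear_combination (-((p:ℤ) ^ (α - 2*i))) * hd + y * hsplit2⟩⟩⟩

/-- A subgroup `S = ⟨(p^i, x), (0, p^(α-i))⟩` of `(ℤ/p^αℤ)²` (with `0 ≤ i ≤ α`,
`0 ≤ x < p^(α-i)`) is stable under `(a,b) ↦ (-b, a)` if and only if `2i ≤ α` and
`x ≡ p^i y` for some integer `y` with `p^(α-2i) ∣ y² + 1`. -/
theorem Nxi_stable_iff (p : ℕ) (hp : p.Prime) (α i x : ℕ) (hi : i ≤ α)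
    (hx : x < p ^ (α - i)) (S : AddSubgroup (ZMod (p ^ α) × ZMod (p ^ α)))
    (hS : S = AddSubgroup.closure
      {(((p : ZMod (p ^ α)) ^ i, (x : ZMod (p ^ α)))),
        ((0 : ZMod (p ^ α)), (p : ZMod (p ^ α)) ^ (α - i))}) :
    S.map (Nxi (p ^ α)) = S ↔
      2 * i ≤ α ∧ ∃ y : ℤ,
        (x : ZMod (p ^ α)) = (p : ZMod (p ^ α)) ^ i * (y : ZMod (p ^ α)) ∧
        (p : ℤ) ^ (α - 2 * i) ∣ y ^ 2 + 1 := by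
  subst hS
  set n := p ^ α with hn
  set g₁ : ZMod n × ZMod n := ((p:ZMod n)^i, (x:ZMod n)) with hg₁
  set g₂ : ZMod n × ZMod n := ((0:ZMod n), (p:ZMod n)^(α-i)) with hg₂
  have hZ : ∀ A B : ℤ, ((A : ZMod n) = (B : ZMod n)) ↔ (p:ℤ)^α ∣ B - A := by
    intro A B
    rw [ZMod.intCast_eq_intCast_iff, Int.modEq_iff_dvd, hn]
    push_cast
    rfl
  have hmem' : ∀ U V : ℤ, (((U:ZMod n), (V:ZMod n)) ∈ AddSubgroup.closure {g₁, g₂}) ↔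
      ∃ a b : ℤ, (p:ℤ)^α ∣ U - a * (p:ℤ)^i ∧
        (p:ℤ)^α ∣ V - (a * (x:ℤ) + b * (p:ℤ)^(α-i)) := by
    intro U V
    rw [AddSubgroup.mem_closure_pair]
    apply exists_congr; intro a
    apply exists_congr; intro b
    have hcomp : a • g₁ + b • g₂ =
        (((a * (p:ℤ)^i : ℤ) : ZMod n), ((a * (x:ℤ) + b * (p:ℤ)^(α-i) : ℤ) : ZMod n)) := by
      rw [hg₁, hg₂, Prod.ext_iff]
      constructor
      · show a • ((p:ZMod n)^i) + b • (0:ZMod n) = _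
        rw [smul_zero, zsmul_eq_mul]
        push_cast
        ring
      · show a • ((x:ZMod n)) + b • ((p:ZMod n)^(α-i)) = _
        rw [zsmul_eq_mul, zsmul_eq_mul]
        push_cast
        ring
    rw [hcomp, Prod.ext_iff]
    exact and_congr (hZ _ _) (hZ _ _)
  -- reduce stability to membership of generator images
  have h4 : ∀ z : ZMod n × ZMod n, Nxi n (Nxi n (Nxi n (Nxi n z))) = z := by
    intro z
    simp [Nxi]
  have hmapiff :
      (AddSubgroup.closure {g₁, g₂}).map (Nxi n) = AddSubgroup.closure {g₁, g₂} ↔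
      (Nxi n g₁ ∈ AddSubgroup.closure {g₁, g₂} ∧
        Nxi n g₂ ∈ AddSubgroup.closure {g₁, g₂}) := by
    constructor
    · intro h
      refine ⟨?_, ?_⟩
      · rw [← h]
        exact AddSubgroup.mem_map.mpr ⟨g₁, AddSubgroup.subset_closure (by simp), rfl⟩
      · rw [← h]
        exact AddSubgroup.mem_map.mpr ⟨g₂, AddSubgroup.subset_closure (by simp), rfl⟩
    · rintro ⟨h1, h2⟩
      have hle : (AddSubgroup.closure {g₁, g₂}).map (Nxi n) ≤ AddSubgroup.closure {g₁, g₂} := by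
        rw [AddSubgroup.map_le_iff_le_comap, AddSubgroup.closure_le]
        intro z hz
        simp only [Set.mem_insert_iff, Set.mem_singleton_iff] at hz
        simp only [SetLike.mem_coe, AddSubgroup.mem_comap]
        rcases hz with rfl | rfl
        · exact h1
        · exact h2
      refine le_antisymm hle fun z hz => ?_
      have m1 : Nxi n z ∈ AddSubgroup.closure {g₁, g₂} :=
        hle (AddSubgroup.mem_map.mpr ⟨z, hz, rfl⟩)
      have m2 : Nxi n (Nxi n z) ∈ AddSubgroup.closure {g₁, g₂} :=
        hle (AddSubgroup.mem_map.mpr ⟨_, m1, rfl⟩)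
      have m3 : Nxi n (Nxi n (Nxi n z)) ∈ AddSubgroup.closure {g₁, g₂} :=
        hle (AddSubgroup.mem_map.mpr ⟨_, m2, rfl⟩)
      exact AddSubgroup.mem_map.mpr ⟨_, m3, h4 z⟩
  rw [hmapiff]
  have e₁ : Nxi n g₁ = (((-(x:ℤ) : ℤ) : ZMod n), (((p:ℤ)^i : ℤ) : ZMod n)) := by
    rw [hg₁]
    show (-(x:ZMod n), (p:ZMod n)^i) = _
    rw [Prod.ext_iff]
    constructor <;> push_cast <;> ring
  have e₂ : Nxi n g₂ = (((-((p:ℤ)^(α-i)) : ℤ) : ZMod n), ((0 : ℤ) : ZMod n)) := by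
    rw [hg₂]
    show (-((p:ZMod n)^(α-i)), (0:ZMod n)) = _
    rw [Prod.ext_iff]
    constructor <;> push_cast <;> ring
  rw [e₁, e₂, hmem' (-(x:ℤ)) ((p:ℤ)^i), hmem' (-((p:ℤ)^(α-i))) (0:ℤ),
    key_arith p hp α i x hi]
  refine and_congr Iff.rfl (exists_congr fun y => and_congr ?_ Iff.rfl)
  rw [show ((x:ℕ) : ZMod n) = (((x:ℤ)) : ZMod n) by push_cast; rfl,
    show ((p:ZMod n)^i * (y:ZMod n)) = (((p:ℤ)^i * y : ℤ) : ZMod n) by push_cast; rfl,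
    hZ]
end

section
/- Let α ≥ 1 and let M be the automorphism of (ℤ/3^αℤ)² given by M(a,b) = (−b, a−b). Then there is exactly one M-stable subgroup of (ℤ/3^αℤ)² of order 3^α. -/
namespace MxiAux

variable (n : ℕ)

noncomputable abbrev Me (n : ℕ) : AddMonoid.End (ZMod n × ZMod n) := Mxi n
noncomputable abbrev Nn (n : ℕ) : AddMonoid.End (ZMod n × ZMod n) := 1 - Me n

theorem Me_apply (z : ZMod n × ZMod n) : Me n z = (-z.2, z.1 - z.2) := rfl
theorem Nn_apply (z : ZMod n × ZMod n) : Nn n z = z - Me n z := rfl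

theorem hM3 : (Me n) ^ 3 = 1 := by
  refine AddMonoidHom.ext fun z => ?_
  show (Me n) ((Me n) ((Me n) z)) = z
  simp only [Me_apply, Prod.ext_iff]
  refine ⟨by simp, by simp; ring⟩

theorem hN2 : (Nn n) ^ 2 = -(3 * Me n) := by
  refine AddMonoidHom.ext fun z => ?_
  show (Nn n) ((Nn n) z) = -((3 : AddMonoid.End (ZMod n × ZMod n)) ((Me n) z))
  rw [Nn_apply, Nn_apply, AddMonoid.End.ofNat_apply]
  simp only [Me_apply, Prod.ext_iff]
  constructor <;> · simp; ring

theorem hNat (x : ZMod n × ZMod n) : ((n : AddMonoid.End (ZMod n × ZMod n))) x = 0 := by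
  rw [AddMonoid.End.natCast_apply]
  ext <;> simp [nsmul_eq_mul, ZMod.natCast_self]

theorem hMN : Commute (Me n) (Nn n) := by
  unfold Nn
  exact (Commute.one_right _).sub_right (Commute.refl _)

theorem hNpow_zero (α : ℕ) : (Nn (3 ^ α)) ^ (2 * α) = 0 := by
  have h3 : (3 : AddMonoid.End (ZMod (3 ^ α) × ZMod (3 ^ α))) ^ α = 0 := by
    rw [← Nat.cast_ofNat (R := AddMonoid.End (ZMod (3 ^ α) × ZMod (3 ^ α))) (n := 3),
      ← Nat.cast_pow]
    exact AddMonoidHom.ext fun x => hNat (3 ^ α) x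
  have hc : Commute (3 : AddMonoid.End (ZMod (3 ^ α) × ZMod (3 ^ α))) (-Me (3 ^ α)) := by
    have := (Nat.cast_commute (α := AddMonoid.End (ZMod (3 ^ α) × ZMod (3 ^ α))) 3
      (Me (3 ^ α))).neg_right
    rwa [Nat.cast_ofNat] at this
  calc (Nn (3 ^ α)) ^ (2 * α) = ((Nn (3 ^ α)) ^ 2) ^ α := by rw [← pow_mul]
    _ = ((3 : AddMonoid.End (ZMod (3 ^ α) × ZMod (3 ^ α))) * (-Me (3 ^ α))) ^ α := by
        rw [hN2]; congr 1; exact neg_mul_eq_mul_neg (3 : AddMonoid.End (ZMod (3 ^ α) × ZMod (3 ^ α))) (Me (3 ^ α))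
    _ = (3 : AddMonoid.End (ZMod (3 ^ α) × ZMod (3 ^ α))) ^ α * (-Me (3 ^ α)) ^ α := hc.mul_pow α
    _ = 0 := by rw [h3, zero_mul]

/-- first isomorphism theorem, cardinality version -/
theorem card_range_mul_card_ker {A B : Type*} [AddCommGroup A] [AddCommGroup B]
    (f : A →+ B) : Nat.card f.range * Nat.card f.ker = Nat.card A := by
  rw [AddSubgroup.card_eq_card_quotient_mul_card_addSubgroup f.ker]
  congr 1
  exact (Nat.card_congr (QuotientAddGroup.quotientKerEquivRange f).toEquiv).symm



theorem cardG (α : ℕ) : Nat.card (ZMod (3 ^ α) × ZMod (3 ^ α)) = 3 ^ (2 * α) := by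
  rw [Nat.card_prod, Nat.card_zmod, ← pow_add, two_mul]

theorem range_le_ker (α : ℕ) :
    AddMonoidHom.range ((Nn (3 ^ α)) ^ α : AddMonoid.End (ZMod (3 ^ α) × ZMod (3 ^ α))) ≤
      AddMonoidHom.ker ((Nn (3 ^ α)) ^ α) := by
  rintro x ⟨y, rfl⟩
  have h0 : (Nn (3 ^ α)) ^ (α + α) = 0 := by rw [← two_mul]; exact hNpow_zero α
  refine AddMonoidHom.mem_ker.2 ?_
  show ((Nn (3 ^ α)) ^ α) (((Nn (3 ^ α)) ^ α) y) = 0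
  have h : ((Nn (3 ^ α)) ^ α * (Nn (3 ^ α)) ^ α) y
      = ((0 : AddMonoid.End (ZMod (3 ^ α) × ZMod (3 ^ α)))) y := by
    rw [← pow_add, h0]
  exact h

theorem card_tors_le (α : ℕ) (hα : 1 ≤ α) :
    Nat.card (AddMonoidHom.ker (AddMonoidHom.mulLeft (3 : ZMod (3 ^ α)))) ≤ 3 := by
  haveI : NeZero ((3 : ℕ) ^ α) := ⟨pow_ne_zero α (by norm_num)⟩
  set f := AddMonoidHom.mulLeft (3 : ZMod (3 ^ α)) with hf
  have h1 : Nat.card f.range * Nat.card f.ker = 3 ^ α := by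
    rw [card_range_mul_card_ker f, Nat.card_zmod]
  have h2 : AddSubgroup.zmultiples (3 : ZMod (3 ^ α)) ≤ f.range := by
    rw [AddSubgroup.zmultiples_le]
    exact ⟨1, by simp [hf]⟩
  have h3 : Nat.card (AddSubgroup.zmultiples (3 : ZMod (3 ^ α))) = 3 ^ (α - 1) := by
    rw [Nat.card_zmultiples]
    have hc : ((3 : ℕ) : ZMod (3 ^ α)) = (3 : ZMod (3 ^ α)) := by norm_cast
    rw [← hc, ZMod.addOrderOf_coe 3 (NeZero.ne _)]
    have hg : Nat.gcd (3 ^ α) 3 = 3 := by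
      rw [Nat.gcd_comm]; exact Nat.gcd_eq_left (dvd_pow_self 3 (by omega))
    rw [hg]
    have : (3 : ℕ) ^ α / 3 = 3 ^ α / 3 ^ 1 := by norm_num
    rw [this, Nat.pow_div hα (by norm_num)]
  have h4 : 3 ^ (α - 1) ≤ Nat.card f.range := h3 ▸ AddSubgroup.card_le_of_le h2
  have hkey : Nat.card f.ker * 3 ^ (α - 1) ≤ 3 * 3 ^ (α - 1) := by
    calc Nat.card f.ker * 3 ^ (α - 1) ≤ Nat.card f.ker * Nat.card f.range :=
          Nat.mul_le_mul_left _ h4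
      _ = 3 ^ α := by rw [mul_comm]; exact h1
      _ = 3 * 3 ^ (α - 1) := by
          rw [← pow_succ']; congr 1; omega
  exact Nat.le_of_mul_le_mul_right hkey (pow_pos (by norm_num) _)

theorem card_ker_Nn_le (α : ℕ) (hα : 1 ≤ α) :
    Nat.card (AddMonoidHom.ker
      ((Nn (3 ^ α)) : (ZMod (3 ^ α) × ZMod (3 ^ α)) →+ (ZMod (3 ^ α) × ZMod (3 ^ α)))) ≤ 3 := by
  haveI : NeZero ((3 : ℕ) ^ α) := ⟨pow_ne_zero α (by norm_num)⟩
  have key : ∀ x : (ZMod (3 ^ α) × ZMod (3 ^ α)), Nn (3 ^ α) x = 0 →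
      x.1 = -x.2 ∧ 3 * x.2 = 0 := by
    intro x hx
    have hx' : x = Me (3 ^ α) x := by
      have := sub_eq_zero.1 hx
      exact this
    rw [Me_apply, Prod.ext_iff] at hx'
    obtain ⟨h1, h2⟩ := hx'
    exact ⟨h1, by linear_combination h1 + h2⟩
  let g : AddMonoidHom.ker ((Nn (3 ^ α)) :
        (ZMod (3 ^ α) × ZMod (3 ^ α)) →+ (ZMod (3 ^ α) × ZMod (3 ^ α))) →
      AddMonoidHom.ker (AddMonoidHom.mulLeft (3 : ZMod (3 ^ α))) :=
    fun x => ⟨x.val.2, AddMonoidHom.mem_ker.2 ((key x.val (AddMonoidHom.mem_ker.1 x.2)).2)⟩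
  have hinj : Function.Injective g := by
    intro x y hxy
    have h2 : x.val.2 = y.val.2 := congrArg Subtype.val hxy
    have hx1 := (key x.val (AddMonoidHom.mem_ker.1 x.2)).1
    have hy1 := (key y.val (AddMonoidHom.mem_ker.1 y.2)).1
    ext
    · rw [hx1, hy1, h2]
    · exact h2
  exact (Nat.card_le_card_of_injective g hinj).trans (card_tors_le α hα)

theorem card_comap_le {A : Type*} [AddCommGroup A] [Finite A] (f : A →+ A) (K : AddSubgroup A) :
    Nat.card (K.comap f) ≤ Nat.card f.ker * Nat.card K := by
  let f' : (K.comap f) →+ K :=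
    AddMonoidHom.codRestrict ((AddMonoidHom.domRestrict f (K.comap f))) K (fun x => x.2)
  have h1 : Nat.card f'.range * Nat.card f'.ker = Nat.card (K.comap f) :=
    card_range_mul_card_ker f'
  have h2 : Nat.card f'.range ≤ Nat.card K :=
    le_trans (AddSubgroup.card_le_of_le le_top) (le_of_eq AddSubgroup.card_top)
  have h3 : Nat.card f'.ker ≤ Nat.card f.ker := by
    let j : f'.ker → f.ker := fun x => ⟨x.val.val, by
      have hx : f' x.val = 0 := AddMonoidHom.mem_ker.1 x.2
      have : f x.val.val = 0 := by
        have := congrArg Subtype.val hx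
        exact this
      exact AddMonoidHom.mem_ker.2 this⟩
    have hj : Function.Injective j := by
      intro x y hxy
      simp only [j, Subtype.mk.injEq] at hxy
      exact Subtype.ext (Subtype.ext hxy)
    exact Nat.card_le_card_of_injective j hj
  calc Nat.card (K.comap f) = Nat.card f'.range * Nat.card f'.ker := h1.symm
    _ ≤ Nat.card K * Nat.card f.ker := Nat.mul_le_mul h2 h3
    _ = Nat.card f.ker * Nat.card K := mul_comm _ _

theorem card_ker_pow_le (α : ℕ) (hα : 1 ≤ α) (k : ℕ) :
    Nat.card (AddMonoidHom.ker ((Nn (3 ^ α)) ^ k :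
      AddMonoid.End (ZMod (3 ^ α) × ZMod (3 ^ α)))) ≤ 3 ^ k := by
  haveI : NeZero ((3 : ℕ) ^ α) := ⟨pow_ne_zero α (by norm_num)⟩
  induction k with
  | zero =>
    have hk : AddMonoidHom.ker ((Nn (3 ^ α)) ^ 0 :
        AddMonoid.End (ZMod (3 ^ α) × ZMod (3 ^ α))) = ⊥ := by
      ext x
      simp only [AddMonoidHom.mem_ker, AddSubgroup.mem_bot, pow_zero]
      exact Iff.rfl
    rw [hk, AddSubgroup.card_bot, pow_zero]
  | succ k ih =>
    have hsplit : ((Nn (3 ^ α)) ^ (k + 1) : AddMonoid.End (ZMod (3 ^ α) × ZMod (3 ^ α)))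
        = AddMonoidHom.comp (Nn (3 ^ α)) ((Nn (3 ^ α)) ^ k) := by
      refine AddMonoidHom.ext fun x => ?_
      rw [pow_succ']
      rfl
    erw [hsplit, ← AddMonoidHom.comap_ker]
    calc Nat.card ((AddMonoidHom.ker (Nn (3 ^ α))).comap ((Nn (3 ^ α)) ^ k :
          AddMonoid.End (ZMod (3 ^ α) × ZMod (3 ^ α))))
        ≤ Nat.card (AddMonoidHom.ker ((Nn (3 ^ α)) ^ k :
          AddMonoid.End (ZMod (3 ^ α) × ZMod (3 ^ α)))) *
          Nat.card (AddMonoidHom.ker (Nn (3 ^ α))) := card_comap_le _ _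
      _ ≤ 3 ^ k * 3 := Nat.mul_le_mul ih (card_ker_Nn_le α hα)
      _ = 3 ^ (k + 1) := by rw [pow_succ]

theorem card_ker_pow_eq (α : ℕ) (hα : 1 ≤ α) :
    Nat.card (AddMonoidHom.ker ((Nn (3 ^ α)) ^ α :
      AddMonoid.End (ZMod (3 ^ α) × ZMod (3 ^ α)))) = 3 ^ α := by
  haveI : NeZero ((3 : ℕ) ^ α) := ⟨pow_ne_zero α (by norm_num)⟩
  refine le_antisymm (card_ker_pow_le α hα α) ?_
  have h1 := card_range_mul_card_ker ((Nn (3 ^ α)) ^ α :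
    AddMonoid.End (ZMod (3 ^ α) × ZMod (3 ^ α)))
  rw [cardG] at h1
  have h2 : Nat.card (AddMonoidHom.range ((Nn (3 ^ α)) ^ α :
        AddMonoid.End (ZMod (3 ^ α) × ZMod (3 ^ α)))) ≤
      Nat.card (AddMonoidHom.ker ((Nn (3 ^ α)) ^ α :
        AddMonoid.End (ZMod (3 ^ α) × ZMod (3 ^ α)))) :=
    AddSubgroup.card_le_of_le (range_le_ker α)
  by_contra h
  push_neg at h
  have hlt : Nat.card (AddMonoidHom.range ((Nn (3 ^ α)) ^ α :
        AddMonoid.End (ZMod (3 ^ α) × ZMod (3 ^ α)))) *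
      Nat.card (AddMonoidHom.ker ((Nn (3 ^ α)) ^ α :
        AddMonoid.End (ZMod (3 ^ α) × ZMod (3 ^ α)))) < 3 ^ α * 3 ^ α :=
    Nat.mul_lt_mul'' (lt_of_le_of_lt h2 h) h
  rw [h1, ← pow_add, ← two_mul] at hlt
  exact lt_irrefl _ hlt

theorem ker_stable (α : ℕ) :
    (AddMonoidHom.ker ((Nn (3 ^ α)) ^ α :
        AddMonoid.End (ZMod (3 ^ α) × ZMod (3 ^ α)))).map (Mxi (3 ^ α)) =
      AddMonoidHom.ker ((Nn (3 ^ α)) ^ α) := by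
  have hc1 : Commute (Me (3 ^ α)) ((Nn (3 ^ α)) ^ α) := (hMN (3 ^ α)).pow_right α
  have hc2 : Commute (Me (3 ^ α) * Me (3 ^ α)) ((Nn (3 ^ α)) ^ α) := hc1.mul_left hc1
  apply le_antisymm
  · rintro x ⟨y, hy, rfl⟩
    refine AddMonoidHom.mem_ker.2 ?_
    show ((Nn (3 ^ α)) ^ α) ((Me (3 ^ α)) y) = 0
    calc ((Nn (3 ^ α)) ^ α) ((Me (3 ^ α)) y)
        = ((Nn (3 ^ α)) ^ α * Me (3 ^ α)) y := rfl
      _ = (Me (3 ^ α) * (Nn (3 ^ α)) ^ α) y := by rw [← hc1.eq]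
      _ = (Me (3 ^ α)) (((Nn (3 ^ α)) ^ α) y) := rfl
      _ = 0 := by erw [AddMonoidHom.mem_ker.1 hy]; exact map_zero _
  · intro y hy
    refine ⟨(Me (3 ^ α)) ((Me (3 ^ α)) y), ?_, ?_⟩
    · refine AddMonoidHom.mem_ker.2 ?_
      calc ((Nn (3 ^ α)) ^ α) ((Me (3 ^ α)) ((Me (3 ^ α)) y))
          = ((Nn (3 ^ α)) ^ α * (Me (3 ^ α) * Me (3 ^ α))) y := rfl
        _ = ((Me (3 ^ α) * Me (3 ^ α)) * (Nn (3 ^ α)) ^ α) y := by rw [← hc2.eq]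
        _ = (Me (3 ^ α)) ((Me (3 ^ α)) (((Nn (3 ^ α)) ^ α) y)) := rfl
        _ = 0 := by erw [AddMonoidHom.mem_ker.1 hy, map_zero, map_zero]
    · have h := congrArg (fun f : AddMonoid.End (ZMod (3 ^ α) × ZMod (3 ^ α)) => f y) (hM3 (3 ^ α))
      exact h

theorem stable_eq_ker (α : ℕ) (hα : 1 ≤ α) (S : AddSubgroup (ZMod (3 ^ α) × ZMod (3 ^ α)))
    (hst : S.map (Mxi (3 ^ α)) = S) (hcard : Nat.card S = 3 ^ α) :
    S = AddMonoidHom.ker ((Nn (3 ^ α)) ^ α :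
      AddMonoid.End (ZMod (3 ^ α) × ZMod (3 ^ α))) := by
  haveI : NeZero ((3 : ℕ) ^ α) := ⟨pow_ne_zero α (by norm_num)⟩
  have hMS : ∀ y ∈ S, (Me (3 ^ α)) y ∈ S := fun y hy => by
    rw [← hst]; exact AddSubgroup.mem_map_of_mem _ hy
  have hNS : S.map (Nn (3 ^ α)) ≤ S := by
    rintro x ⟨y, hy, rfl⟩
    show y - (Me (3 ^ α)) y ∈ S
    exact sub_mem hy (hMS y hy)
  have hpow_comp : ∀ k, ((Nn (3 ^ α)) ^ (k + 1) : AddMonoid.End (ZMod (3 ^ α) × ZMod (3 ^ α))) =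
      AddMonoidHom.comp ((Nn (3 ^ α)) ^ k : AddMonoid.End (ZMod (3 ^ α) × ZMod (3 ^ α)))
        (Nn (3 ^ α)) :=
    fun k => AddMonoidHom.ext fun x => by rw [pow_succ]; rfl
  have hpow_comp' : ∀ k, ((Nn (3 ^ α)) ^ (k + 1) : AddMonoid.End (ZMod (3 ^ α) × ZMod (3 ^ α))) =
      AddMonoidHom.comp (Nn (3 ^ α))
        ((Nn (3 ^ α)) ^ k : AddMonoid.End (ZMod (3 ^ α) × ZMod (3 ^ α))) :=
    fun k => AddMonoidHom.ext fun x => by rw [pow_succ']; rfl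
  have hstep : ∀ k, S.map ((Nn (3 ^ α)) ^ (k + 1)) = (S.map ((Nn (3 ^ α)) ^ k)).map (Nn (3 ^ α)) := by
    intro k
    erw [AddSubgroup.map_map, ← hpow_comp' k]; rfl
  have hanti : ∀ k, S.map ((Nn (3 ^ α)) ^ (k + 1)) ≤ S.map ((Nn (3 ^ α)) ^ k) := by
    intro k
    erw [hpow_comp k, ← AddSubgroup.map_map]
    exact AddSubgroup.map_mono hNS
  have hchain : ∀ k m, S.map ((Nn (3 ^ α)) ^ (k + m)) ≤ S.map ((Nn (3 ^ α)) ^ k) := by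
    intro k m
    induction m with
    | zero => exact le_rfl
    | succ m ih => exact (hanti (k + m)).trans ih
  have hstab : ∀ k, S.map ((Nn (3 ^ α)) ^ k) = S.map ((Nn (3 ^ α)) ^ (k + 1)) →
      ∀ m, S.map ((Nn (3 ^ α)) ^ (k + m)) = S.map ((Nn (3 ^ α)) ^ k) := by
    intro k h m
    induction m with
    | zero => rfl
    | succ m ih =>
      have : S.map ((Nn (3 ^ α)) ^ (k + m + 1)) = (S.map ((Nn (3 ^ α)) ^ (k + m))).map (Nn (3 ^ α)) :=
        hstep (k + m)
      erw [show k + (m + 1) = k + m + 1 from rfl, this, ih, ← hstep k, ← h]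
  have hbot : S.map ((Nn (3 ^ α)) ^ (2 * α)) = ⊥ := by
    rw [hNpow_zero α]
    refine le_antisymm ?_ bot_le
    rintro x ⟨y, hy, rfl⟩
    show ((0 : AddMonoid.End (ZMod (3 ^ α) × ZMod (3 ^ α)))) y ∈ (⊥ :
      AddSubgroup (ZMod (3 ^ α) × ZMod (3 ^ α)))
    simp
  have hSbot : S.map ((Nn (3 ^ α)) ^ α) = ⊥ := by
    by_contra hne
    have hne' : ∀ k, k ≤ α → S.map ((Nn (3 ^ α)) ^ k) ≠ ⊥ := by
      intro k hk h0
      apply hne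
      have hle : S.map ((Nn (3 ^ α)) ^ α) ≤ S.map ((Nn (3 ^ α)) ^ k) := by
        have h := hchain k (α - k)
        rwa [Nat.add_sub_cancel' hk] at h
      rw [h0] at hle
      exact le_bot_iff.1 hle
    have hlt : ∀ k, k < α → 3 * Nat.card (S.map ((Nn (3 ^ α)) ^ (k + 1))) ≤
        Nat.card (S.map ((Nn (3 ^ α)) ^ k)) := by
      intro k hk
      have hle := hanti k
      have hneq : S.map ((Nn (3 ^ α)) ^ (k + 1)) ≠ S.map ((Nn (3 ^ α)) ^ k) := by
        intro h
        apply hne' k (le_of_lt hk)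
        have h2 := hstab k h.symm (2 * α - k)
        rw [Nat.add_sub_cancel' (by omega : k ≤ 2 * α)] at h2
        erw [← h2, hbot]
      have hcardlt : Nat.card (S.map ((Nn (3 ^ α)) ^ (k + 1))) <
          Nat.card (S.map ((Nn (3 ^ α)) ^ k)) := by
        rcases lt_or_eq_of_le (AddSubgroup.card_le_of_le hle) with h | h
        · exact h
        · exact absurd (AddSubgroup.eq_of_le_of_card_ge hle (le_of_eq h.symm)) hneq
      obtain ⟨a, -, ha⟩ := (Nat.dvd_prime_pow Nat.prime_three).1
        ((AddSubgroup.card_addSubgroup_dvd_card (S.map ((Nn (3 ^ α)) ^ (k + 1)))).trans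
          (cardG α).dvd)
      obtain ⟨b, -, hb⟩ := (Nat.dvd_prime_pow Nat.prime_three).1
        ((AddSubgroup.card_addSubgroup_dvd_card (S.map ((Nn (3 ^ α)) ^ k))).trans (cardG α).dvd)
      rw [ha, hb] at hcardlt ⊢
      have hab : a < b := (Nat.pow_lt_pow_iff_right (by norm_num)).1 hcardlt
      calc 3 * 3 ^ a = 3 ^ (a + 1) := by rw [pow_succ, mul_comm]
        _ ≤ 3 ^ b := Nat.pow_le_pow_right (by norm_num) (by omega)
    have hacc : ∀ k, k ≤ α → 3 ^ k * Nat.card (S.map ((Nn (3 ^ α)) ^ k)) ≤ 3 ^ α := by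
      intro k
      induction k with
      | zero =>
        intro _
        have hid : S.map ((Nn (3 ^ α)) ^ 0) = S := by
          erw [pow_zero]
          ext x
          constructor
          · rintro ⟨y, hy, rfl⟩
            exact hy
          · intro hx
            exact ⟨x, hx, rfl⟩
        erw [hid, hcard, pow_zero, one_mul]
      | succ k ih =>
        intro hk1
        have h1 := hlt k (by omega)
        calc 3 ^ (k + 1) * Nat.card (S.map ((Nn (3 ^ α)) ^ (k + 1)))
            = 3 ^ k * (3 * Nat.card (S.map ((Nn (3 ^ α)) ^ (k + 1)))) := by ring
          _ ≤ 3 ^ k * Nat.card (S.map ((Nn (3 ^ α)) ^ k)) := Nat.mul_le_mul_left _ h1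
          _ ≤ 3 ^ α := ih (by omega)
    have h2 : 1 < Nat.card (S.map ((Nn (3 ^ α)) ^ α)) :=
      (AddSubgroup.one_lt_card_iff_ne_bot _).2 hne
    have h3 := hacc α le_rfl
    have h4 : (0:ℕ) < 3 ^ α := pow_pos (by norm_num) α
    nlinarith
  have hle : S ≤ AddMonoidHom.ker ((Nn (3 ^ α)) ^ α :
      AddMonoid.End (ZMod (3 ^ α) × ZMod (3 ^ α))) := by
    intro y hy
    refine AddMonoidHom.mem_ker.2 ?_
    have h : ((Nn (3 ^ α)) ^ α) y ∈ S.map ((Nn (3 ^ α)) ^ α) :=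
      AddSubgroup.mem_map_of_mem _ hy
    rw [hSbot] at h
    exact AddSubgroup.mem_bot.1 h
  exact AddSubgroup.eq_of_le_of_card_ge hle
    (by rw [hcard, card_ker_pow_eq α hα])

end MxiAux

/-- For `α ≥ 1` there is exactly one subgroup of `(ℤ/3^αℤ)²` of order `3^α` stable
under `(a,b) ↦ (-b, a-b)`. -/
theorem count_Mxi_stable_three (α : ℕ) (hα : 1 ≤ α) :
    Nat.card {S : AddSubgroup (ZMod (3 ^ α) × ZMod (3 ^ α)) //
        S.map (Mxi (3 ^ α)) = S ∧ Nat.card S = 3 ^ α} = 1 := by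
  classical
  haveI : NeZero ((3 : ℕ) ^ α) := ⟨pow_ne_zero α (by norm_num)⟩
  rw [Nat.card_eq_one_iff_unique]
  constructor
  · constructor
    intro x y
    apply Subtype.ext
    rw [MxiAux.stable_eq_ker α hα x.val x.2.1 x.2.2,
      MxiAux.stable_eq_ker α hα y.val y.2.1 y.2.2]
  · exact ⟨⟨AddMonoidHom.ker ((MxiAux.Nn (3 ^ α)) ^ α :
      AddMonoid.End (ZMod (3 ^ α) × ZMod (3 ^ α))),
      MxiAux.ker_stable α, MxiAux.card_ker_pow_eq α hα⟩⟩
end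

section
/- Let E be an elliptic curve, H a finite subgroup of E, ξ ∈ Aut₀(E) a nontrivial automorphism fixing the origin, and q, q' ∈ E. Define G_{H,ξ,q} to be the subgroup of Aut(E) generated by the translations by elements of H together with the automorphism μ_{ξ,q}: x ↦ ξ(x) + q. Assume H is ξ-stable. Then G_{H,ξ,q} = G_{H,ξ,q'} if and only if q − q' ∈ H. -/
/-- The affine automorphism `μ_{ξ,q} : x ↦ ξ(x) + q` of (the points of) an elliptic
curve `E`, as a permutation of `E`. -/
def affineMu {E : Type*} [AddCommGroup E] (ξ : AddAut E) (q : E) : Equiv.Perm E :=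
  ξ.toEquiv.trans (Equiv.addRight q)

/-- The group `G_{H,ξ,q} = ⟨μ_{ξ,q}, H⟩` of automorphisms of `E` generated by the
translations by elements of `H` and the map `μ_{ξ,q} : x ↦ ξ(x) + q`. -/
def GHxiq {E : Type*} [AddCommGroup E] (H : AddSubgroup E) (ξ : AddAut E) (q : E) :
    Subgroup (Equiv.Perm E) :=
  Subgroup.closure ({affineMu ξ q} ∪ (fun h : E => Equiv.addRight h) '' H)

lemma affineMu_apply {E : Type*} [AddCommGroup E] (ξ : AddAut E) (q x : E) :
    affineMu ξ q x = ξ x + q := rfl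

/-- If `q - q' ∈ H`, then `G_{H,ξ,q} ≤ G_{H,ξ,q'}`. -/
lemma GHxiq_le_of_sub_mem {E : Type*} [AddCommGroup E] (H : AddSubgroup E) (ξ : AddAut E)
    (q q' : E) (h : q - q' ∈ H) : GHxiq H ξ q ≤ GHxiq H ξ q' := by
  rw [GHxiq, Subgroup.closure_le]
  rintro f (rfl | ⟨h₀, hh₀, rfl⟩)
  · have : affineMu ξ q = Equiv.addRight (q - q') * affineMu ξ q' := by
      ext x
      simp only [affineMu_apply, Equiv.Perm.mul_apply, Equiv.coe_addRight]
      abel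
    rw [this]
    exact mul_mem
      (Subgroup.subset_closure (Or.inr ⟨q - q', h, rfl⟩))
      (Subgroup.subset_closure (Or.inl rfl))
  · exact Subgroup.subset_closure (Or.inr ⟨h₀, hh₀, rfl⟩)

/-- Let `E` be an elliptic curve, `H ≤ E` a finite subgroup, `ξ` a nontrivial
automorphism of `E` fixing the origin of finite order `ℓ ≥ 2` (on an elliptic curve
`ξ` satisfies `1 + ξ + ⋯ + ξ^(ℓ-1) = 0`), `H` `ξ`-stable, and `q, q' ∈ E`. Then
`G_{H,ξ,q} = G_{H,ξ,q'}` if and only if `q - q' ∈ H`. -/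
theorem GHxiq_eq_iff {E : Type*} [AddCommGroup E] (ξ : AddAut E) (hξ : ξ ≠ 0)
    (ℓ : ℕ) (hℓ : 2 ≤ ℓ) (hord : addOrderOf ξ = ℓ)
    (hcyc : ∀ x : E, ∑ i ∈ Finset.range ℓ, (i • ξ) x = 0)
    (H : AddSubgroup E) [Finite H] (hH : H.map ξ.toAddMonoidHom = H) (q q' : E) :
    GHxiq H ξ q = GHxiq H ξ q' ↔ q - q' ∈ H := by
  constructor
  · intro heq
    -- `H` is stable under all powers of `ξ`
    have hstep : ∀ h ∈ H, ξ h ∈ H := by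
      intro h hh
      have := AddSubgroup.mem_map_of_mem ξ.toAddMonoidHom hh
      rwa [hH] at this
    have hmem : ∀ (k : ℕ), ∀ h ∈ H, (k • ξ) h ∈ H := by
      intro k
      induction k with
      | zero => intro h hh; simpa using hh
      | succ n ih =>
        intro h hh
        have : ((n + 1) • ξ) h = (n • ξ) (ξ h) := by rw [succ_nsmul]; rfl
        rw [this]
        exact ih _ (hstep h hh)
    -- the partial sums `sq k = q + ξ q + ⋯ + ξ^(k-1) q`
    set sq : ℕ → E := fun k => ∑ i ∈ Finset.range k, (i • ξ) q with hsq
    have hsq_add : ∀ a b, sq (a + b) = sq a + (a • ξ) (sq b) := by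
      intro a b
      have hmap : (a • ξ) (sq b) = ∑ i ∈ Finset.range b, ((a + i) • ξ) q := by
        rw [hsq]
        rw [map_sum]
        refine Finset.sum_congr rfl fun i _ => ?_
        rw [add_nsmul]; rfl
      rw [hmap, hsq]
      exact Finset.sum_range_add _ a b
    have hsq_l : sq ℓ = 0 := hcyc q
    have hsq_lmul : ∀ m, sq (ℓ * m) = 0 := by
      intro m
      induction m with
      | zero => simp [hsq]
      | succ n ih =>
        have : ℓ * (n + 1) = ℓ * n + ℓ := by ring
        rw [this, hsq_add, ih, hsq_l, map_zero, add_zero]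
    have hxil : ℓ • ξ = 0 := by rw [← hord]; exact addOrderOf_nsmul_eq_zero ξ
    -- the key invariant subgroup `K`
    let K : Subgroup (Equiv.Perm E) :=
      { carrier := { f | ∃ k c, c - sq k ∈ H ∧ ∀ x, f x = (k • ξ) x + c }
        one_mem' := ⟨0, 0, by simpa [hsq] using H.zero_mem, fun x => by simp⟩
        mul_mem' := by
          rintro f g ⟨k, c, hc, hf⟩ ⟨j, d, hd, hg⟩
          refine ⟨k + j, (k • ξ) d + c, ?_, fun x => ?_⟩
          · have : (k • ξ) d + c - sq (k + j) = (k • ξ) (d - sq j) + (c - sq k) := by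
              rw [hsq_add, map_sub]
              abel
            rw [this]
            exact H.add_mem (hmem k _ hd) hc
          · have : ((k + j) • ξ) x = (k • ξ) ((j • ξ) x) := by rw [add_nsmul]; rfl
            rw [Equiv.Perm.mul_apply, hf, hg, this, map_add]
            abel
        inv_mem' := by
          rintro f ⟨k, c, hc, hf⟩
          set m := k * (ℓ - 1) with hm
          have hkm : k + m = ℓ * k := by
            have h1 : 1 ≤ ℓ := by omega
            rw [hm]
            calc k + k * (ℓ - 1) = k * (1 + (ℓ - 1)) := by ring
              _ = k * ℓ := by rw [Nat.add_sub_cancel' h1]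
              _ = ℓ * k := Nat.mul_comm _ _
          have hpow0 : ∀ y : E, (k • ξ) ((m • ξ) y) = y := by
            intro y
            have h1 : (k • ξ) ((m • ξ) y) = ((k + m) • ξ) y := by rw [add_nsmul]; rfl
            have h2 : (k + m) • ξ = 0 := by rw [hkm, mul_nsmul, hxil, nsmul_zero]
            rw [h1, h2]; rfl
          have hsqm : sq m = -((m • ξ) (sq k)) := by
            have h0 : sq (m + k) = 0 := by
              have : m + k = ℓ * k := by omega
              rw [this]; exact hsq_lmul k
            rw [hsq_add] at h0
            exact eq_neg_of_add_eq_zero_left h0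
          refine ⟨m, -((m • ξ) c), ?_, fun x => ?_⟩
          · have : -((m • ξ) c) - sq m = -((m • ξ) (c - sq k)) := by
              rw [hsqm, map_sub]
              abel
            rw [this]
            exact H.neg_mem (hmem m _ hc)
          · rw [Equiv.Perm.inv_def, Equiv.symm_apply_eq, hf, map_add, hpow0, map_neg,
              hpow0]
            abel }
    -- the closure is contained in `K`
    have hKle : GHxiq H ξ q ≤ K := by
      rw [GHxiq, Subgroup.closure_le]
      rintro f (rfl | ⟨h₀, hh₀, rfl⟩)
      · exact ⟨1, q, by simpa [hsq] using H.zero_mem,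
          fun x => by rw [affineMu_apply, one_nsmul]⟩
      · exact ⟨0, h₀, by simpa [hsq] using hh₀, fun x => by simp⟩
    have hmu' : affineMu ξ q' ∈ K := by
      refine hKle ?_
      rw [heq]
      exact Subgroup.subset_closure (Or.inl rfl)
    obtain ⟨k, c, hc, hfx⟩ := hmu'
    have hc0 : q' = c := by
      have := hfx 0
      simpa [affineMu_apply] using this
    have hxk : ξ = k • ξ := by
      ext x
      have h1 := hfx x
      rw [affineMu_apply, ← hc0] at h1
      exact add_right_cancel h1
    have hmod : 1 ≡ k [MOD ℓ] := by
      have h2 : 1 • ξ = k • ξ := by rw [one_nsmul]; exact hxk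
      have := nsmul_eq_nsmul_iff_modEq.mp h2
      rwa [hord] at this
    have hk1 : k % ℓ = 1 := by
      have h3 : 1 % ℓ = k % ℓ := hmod
      rw [← h3]
      exact Nat.mod_eq_of_lt (by omega)
    have hsqk : sq k = q := by
      have hdk : ℓ * (k / ℓ) + 1 = k := by
        rw [← hk1]
        exact Nat.div_add_mod k ℓ
      rw [← hdk, hsq_add, hsq_lmul, zero_add, mul_nsmul, hxil, nsmul_zero]
      simp [hsq]
    have := H.neg_mem hc
    rwa [neg_sub, hsqk, ← hc0] at this
  · intro h
    exact le_antisymm (GHxiq_le_of_sub_mem H ξ q q' h)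
      (GHxiq_le_of_sub_mem H ξ q' q (by simpa using H.neg_mem h))
end

section
/- Let E be an elliptic curve, ξ ∈ Aut₀(E) of order ℓ ∈ {2,3,4,6}, H ≤ E a ξ-stable finite subgroup of order m, and q ∈ E. Let G = G_{H,ξ,q} = ⟨μ_{ξ,q}, H⟩ where μ_{ξ,q}(x) = ξ(x)+q. Then the sum in E of the orbit {g(0) : g ∈ G} (with multiplicity, over all g ∈ G) equals ε_{ξ,m}(q), where ε_{ξ,m}(x) = m·x if ℓ = 2; m(2+ξ)(x) if ℓ = 3; 2m(1+ξ)(x) if ℓ = 4; and 6m·ξ(x) if ℓ = 6. -/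
/-- Let `E` be an elliptic curve, `ξ ∈ Aut₀(E)` of order `ℓ ∈ {2,3,4,6}` (acting as
a primitive `ℓ`th root of unity, hence satisfying the corresponding cyclotomic
relation), `H ≤ E` a `ξ`-stable finite subgroup of order `m`, `q ∈ E`, and
`G = G_{H,ξ,q} = ⟨μ_{ξ,q}, H⟩` where `μ_{ξ,q}(x) = ξ(x) + q`. Since `g(0)` for
`g = μ_{ξ,q}^i ∘ t_h` equals `ξ^i h + (1 + ξ + ⋯ + ξ^(i-1)) q`, the sum over `G` of
`g(0)` is `∑_{i<ℓ} ∑_{h∈H} (ξ^i h + ∑_{j<i} ξ^j q)`, and it equals `ε_{ξ,m}(q)`,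
namely `m•q` if `ℓ = 2`; `m•(2•q + ξq)` if `ℓ = 3`; `(2m)•(q + ξq)` if `ℓ = 4`; and
`(6m)•(ξq)` if `ℓ = 6`. -/
theorem sum_orbit_zero_eq_epsilon {E : Type*} [AddCommGroup E] (ξ : AddAut E)
    (ℓ m : ℕ) (hℓ : ℓ ∈ ({2, 3, 4, 6} : Set ℕ)) (hord : addOrderOf ξ = ℓ)
    (H : AddSubgroup E) [Fintype H] (hm : Nat.card H = m)
    (hH : H.map ξ.toAddMonoidHom = H) (q : E) :
    (ℓ = 2 → (∀ x : E, ξ x = -x) →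
      ∑ i ∈ Finset.range ℓ, ∑ h : H,
          ((i • ξ) (h : E) + ∑ j ∈ Finset.range i, (j • ξ) q) = m • q) ∧
    (ℓ = 3 → (∀ x : E, (2 • ξ) x + ξ x + x = 0) →
      ∑ i ∈ Finset.range ℓ, ∑ h : H,
          ((i • ξ) (h : E) + ∑ j ∈ Finset.range i, (j • ξ) q) =
        m • (2 • q + ξ q)) ∧
    (ℓ = 4 → (∀ x : E, (2 • ξ) x + x = 0) →
      ∑ i ∈ Finset.range ℓ, ∑ h : H,
          ((i • ξ) (h : E) + ∑ j ∈ Finset.range i, (j • ξ) q) =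
        (2 * m) • (q + ξ q)) ∧
    (ℓ = 6 → (∀ x : E, (2 • ξ) x - ξ x + x = 0) →
      ∑ i ∈ Finset.range ℓ, ∑ h : H,
          ((i • ξ) (h : E) + ∑ j ∈ Finset.range i, (j • ξ) q) =
        (6 * m) • ξ q) := by
  classical
  subst hm
  set S : E := ∑ h : H, (h : E) with hSdef
  set n : ℕ := Fintype.card H with hndef
  have hcard : Nat.card H = n := Nat.card_eq_fintype_card
  have hmem : ∀ x ∈ H, ξ x ∈ H := by
    intro x hx
    rw [← hH]
    exact ⟨x, hx, rfl⟩
  have hmem' : ∀ x ∈ H, (-ξ) x ∈ H := by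
    intro x hx
    rw [← hH] at hx
    obtain ⟨y, hy, hxy⟩ := hx
    have : (-ξ) x = y := by
      simp [← hxy]
    rwa [this]
  let e : H ≃ H :=
  { toFun := fun h => ⟨ξ h, hmem h h.2⟩
    invFun := fun h => ⟨(-ξ) h, hmem' h h.2⟩
    left_inv := fun h => by ext; simp
    right_inv := fun h => by ext; simp }
  have key1 : ∀ f : E → E, ∑ h : H, f (ξ (h : E)) = ∑ h : H, f (h : E) := fun f =>
    Fintype.sum_equiv e (fun h => f (ξ (h : E))) (fun h => f (h : E)) (fun h => rfl)
  have key : ∀ i : ℕ, ∑ h : H, (i • ξ) (h : E) = S := by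
    intro i
    induction i with
    | zero => simp [hSdef]
    | succ k ih =>
      have hpt : ∀ x : E, ((k + 1) • ξ) x = (k • ξ) (ξ x) := by
        intro x; rw [succ_nsmul]; rfl
      simp_rw [hpt]
      rw [key1 (fun x => (k • ξ) x)]
      exact ih
  have hSpow : ∀ i : ℕ, (i • ξ) S = S := by
    intro i
    rw [hSdef, map_sum]
    exact key i
  have hS1 : ξ S = S := by
    have := hSpow 1; rwa [one_nsmul] at this
  have hmain : ∑ i ∈ Finset.range ℓ, ∑ h : H,
      ((i • ξ) (h : E) + ∑ j ∈ Finset.range i, (j • ξ) q)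
      = ℓ • S + n • ∑ i ∈ Finset.range ℓ, ∑ j ∈ Finset.range i, (j • ξ) q := by
    have h1 : ∀ i : ℕ, ∑ h : H,
        ((i • ξ) (h : E) + ∑ j ∈ Finset.range i, (j • ξ) q)
        = S + n • ∑ j ∈ Finset.range i, (j • ξ) q := by
      intro i
      rw [Finset.sum_add_distrib, key i, Finset.sum_const, Finset.card_univ]
    simp_rw [h1]
    rw [Finset.sum_add_distrib, Finset.sum_const, Finset.card_range, ← Finset.smul_sum]
  refine ⟨?_, ?_, ?_, ?_⟩
  · -- ℓ = 2
    intro hl hrel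
    subst hl
    have hSS : S + S = 0 := by
      have h := hrel S
      rw [hS1] at h
      rwa [eq_neg_iff_add_eq_zero] at h
    rw [hmain, hcard]
    have hT : ∑ i ∈ Finset.range 2, ∑ j ∈ Finset.range i, (j • ξ) q = q := by
      simp [Finset.sum_range_succ]
    rw [hT, show (2 : ℕ) • S = S + S from two_smul ℕ S, hSS, zero_add]
  · -- ℓ = 3
    intro hl hrel
    subst hl
    have hSSS : S + S + S = 0 := by
      have h := hrel S
      rwa [hSpow 2, hS1] at h
    have h3S : (3 : ℕ) • S = 0 := by
      rw [show (3 : ℕ) = 2 + 1 from rfl, add_nsmul, two_smul, one_nsmul]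
      exact hSSS
    rw [hmain, hcard, h3S, zero_add]
    have hT : ∑ i ∈ Finset.range 3, ∑ j ∈ Finset.range i, (j • ξ) q
        = 2 • q + ξ q := by
      simp [Finset.sum_range_succ, one_nsmul]
      abel
    rw [hT]
  · -- ℓ = 4
    intro hl hrel
    subst hl
    have hSS : S + S = 0 := by
      have h := hrel S
      rwa [hSpow 2] at h
    have h4S : (4 : ℕ) • S = 0 := by
      rw [show (4 : ℕ) = 2 * 2 from rfl, mul_smul, two_smul ℕ S, hSS, smul_zero]
    have h2q : (2 • ξ) q = -q := by
      have h := hrel q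
      exact eq_neg_of_add_eq_zero_left h
    rw [hmain, hcard, h4S, zero_add]
    have hT : ∑ i ∈ Finset.range 4, ∑ j ∈ Finset.range i, (j • ξ) q
        = 2 • (q + ξ q) := by
      simp only [Finset.sum_range_succ, Finset.sum_range_zero, zero_nsmul, one_nsmul,
        AddAut.zero_apply, h2q]
      abel
    rw [hT, ← mul_smul, Nat.mul_comm]
  · -- ℓ = 6
    intro hl hrel
    subst hl
    have hrel' : ∀ x : E, (2 • ξ) x = ξ x - x := by
      intro x
      have h := hrel x
      rw [sub_add_eq_add_sub, sub_eq_zero] at h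
      exact eq_sub_of_add_eq h
    have hS0 : S = 0 := by
      have h := hrel S
      rwa [hSpow 2, hS1, sub_self, zero_add] at h
    have h3q : (3 • ξ) q = -q := by
      have : (3 • ξ) q = (2 • ξ) (ξ q) := by rw [succ_nsmul]; rfl
      rw [this, hrel' (ξ q), show ξ (ξ q) = (2 • ξ) q from rfl, hrel' q]
      abel
    have h4q : (4 • ξ) q = -(ξ q) := by
      have : (4 • ξ) q = ξ ((3 • ξ) q) := by
        rw [show (4 : ℕ) = 1 + 3 from rfl, add_nsmul, one_nsmul]; rfl
      rw [this, h3q, map_neg]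
    rw [hmain, hcard, hS0, smul_zero, zero_add]
    have hT : ∑ i ∈ Finset.range 6, ∑ j ∈ Finset.range i, (j • ξ) q
        = 6 • ξ q := by
      simp only [Finset.sum_range_succ, Finset.sum_range_zero, zero_nsmul, one_nsmul,
        AddAut.zero_apply, hrel' q, h3q, h4q]
      abel
    rw [hT, ← mul_smul, Nat.mul_comm]
end
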